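/- Let X be a standard Borel space, f : X → X a Borel function, and let D_f be the Borel directed graph generated by f, i.e., (x,y) ∈ D_f iff y = f(x) and x ≠ y. Then the following are equivalent: (1) the underlying graph of D_f has finite Borel chromatic number; (2) there is a Borel set A ⊆ X that is independent in the underlying graph of D_f and recurrent (i.e., ρ(x, A) < ∞ for all x ∈ X, where ρ is directed distance in D_f); (3) the underlying graph of D_f has Borel chromatic number at most 3. -/

import Mathlib

section Aux

variable {X : Type*} [MeasurableSpace X]

/-- (1) → (2): from a finite Borel coloring, produce a Borel independent recurrent set. -/
theorem aux_one_two [StandardBorelSpace X] (f : X → X) (hf : Measurable f)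
    (h : ∃ k : ℕ, ∃ c : X → Fin k, Measurable c ∧
        ∀ x y : X, x ≠ y → (f x = y ∨ f y = x) → c x ≠ c y) :
    ∃ A : Set X, MeasurableSet A ∧
        (∀ x ∈ A, ∀ y ∈ A, x ≠ y → f x ≠ y ∧ f y ≠ x) ∧
        (∀ x : X, ∃ k : ℕ, f^[k] x ∈ A) := by
  obtain ⟨k, c, hc, hprop⟩ := h
  set c' : X → ℕ := fun x => (c x).val with hc'def
  have hc' : Measurable c' := measurable_to_nat fun x => by
    have : c' ⁻¹' {c' x} = c ⁻¹' {i | i.val = c' x} := by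
      ext z; simp [c']
    rw [this]
    exact hc (Set.Finite.measurableSet (Set.toFinite _))
  -- A₀ : points whose color is minimal on their forward orbit
  set A₀ : Set X := ⋂ n : ℕ, {x | c' x ≤ c' (f^[n] x)} with hA₀def
  have hA₀meas : MeasurableSet A₀ :=
    MeasurableSet.iInter fun n => measurableSet_le hc' (hc'.comp (hf.iterate n))
  have hFix : MeasurableSet {x : X | f x = x} := by
    letI := upgradeStandardBorel X
    exact MeasureTheory.StronglyMeasurable.measurableSet_eq_fun
      hf.stronglyMeasurable measurable_id.stronglyMeasurable
  set A : Set X := A₀ ∩ ({x | f x = x} ∪ (f ⁻¹' A₀)ᶜ) with hAdef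
  have hAmeas : MeasurableSet A :=
    hA₀meas.inter (hFix.union (hA₀meas.preimage hf).compl)
  refine ⟨A, hAmeas, ?_, ?_⟩
  · -- independence
    rintro x ⟨hx0, hx1⟩ y ⟨hy0, hy1⟩ hxy
    simp only [Set.mem_union, Set.mem_setOf_eq, Set.mem_compl_iff, Set.mem_preimage] at hx1 hy1
    constructor
    · intro hfx
      rcases hx1 with h1 | h1
      · exact hxy (h1.symm.trans hfx)
      · exact h1 (hfx ▸ hy0)
    · intro hfy
      rcases hy1 with h1 | h1
      · exact hxy (hfy.symm.trans h1)
      · exact h1 (hfy ▸ hx0)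
  · -- recurrence
    -- every point reaches A₀
    have reachA₀ : ∀ x : X, ∃ n : ℕ, f^[n] x ∈ A₀ := by
      intro x
      have hne : (Set.range fun n : ℕ => c' (f^[n] x)).Nonempty := ⟨c' x, 0, rfl⟩
      obtain ⟨n, hn⟩ := Nat.sInf_mem hne
      have hn' : c' (f^[n] x) = sInf (Set.range fun n : ℕ => c' (f^[n] x)) := hn
      refine ⟨n, Set.mem_iInter.2 fun m => ?_⟩
      have heq : c' (f^[m] (f^[n] x)) = c' (f^[m + n] x) := by
        rw [Function.iterate_add_apply]
      rw [Set.mem_setOf_eq, heq, hn']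
      exact Nat.sInf_le ⟨m + n, rfl⟩
    -- from A₀, reach A in few steps
    have reachA : ∀ m : ℕ, ∀ z : X, z ∈ A₀ → k - c' z ≤ m → ∃ j : ℕ, f^[j] z ∈ A := by
      intro m
      induction m with
      | zero =>
        intro z _ hle
        have : c' z < k := (c z).isLt
        omega
      | succ m ih =>
        intro z hz hle
        by_cases hk2 : f z = z ∨ f z ∉ A₀
        · refine ⟨0, ⟨hz, ?_⟩⟩
          simpa only [Set.mem_union, Set.mem_setOf_eq, Set.mem_compl_iff,
            Set.mem_preimage, Function.iterate_zero_apply] using hk2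
        · push_neg at hk2
          obtain ⟨hfz_ne, hfz0⟩ := hk2
          have hlt : c' z < c' (f z) := by
            have hle1 : c' z ≤ c' (f z) := by
              have := Set.mem_iInter.1 hz 1
              simpa using this
            have hne : c z ≠ c (f z) := hprop z (f z) (Ne.symm hfz_ne) (Or.inl rfl)
            have : c' z ≠ c' (f z) := fun h => hne (Fin.ext h)
            omega
          have hklt : c' (f z) < k := (c (f z)).isLt
          obtain ⟨j, hj⟩ := ih (f z) hfz0 (by omega)
          exact ⟨j + 1, by rwa [Function.iterate_succ_apply]⟩
    intro x
    obtain ⟨n, hn⟩ := reachA₀ x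
    obtain ⟨j, hj⟩ := reachA (k - c' (f^[n] x)) (f^[n] x) hn le_rfl
    exact ⟨j + n, by rwa [Function.iterate_add_apply]⟩

/-- (2) → (3): from a Borel independent recurrent set, a Borel 3-coloring. -/
theorem aux_two_three (f : X → X) (hf : Measurable f)
    (h : ∃ A : Set X, MeasurableSet A ∧
        (∀ x ∈ A, ∀ y ∈ A, x ≠ y → f x ≠ y ∧ f y ≠ x) ∧
        (∀ x : X, ∃ k : ℕ, f^[k] x ∈ A)) :
    ∃ c : X → Fin 3, Measurable c ∧
        ∀ x y : X, x ≠ y → (f x = y ∨ f y = x) → c x ≠ c y := by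
  classical
  obtain ⟨A, hAmeas, hAind, hArec⟩ := h
  set d : X → ℕ := fun x => Nat.find (hArec x) with hddef
  have hd_spec : ∀ x, f^[d x] x ∈ A := fun x => Nat.find_spec (hArec x)
  have hd_min : ∀ x, ∀ m < d x, f^[m] x ∉ A := fun x => fun m hm => Nat.find_min (hArec x) hm
  have hd_le : ∀ x n, f^[n] x ∈ A → d x ≤ n := fun x n hn => Nat.find_le hn
  have hd : Measurable d := measurable_to_nat fun x => by
    have : d ⁻¹' {d x} = {z | f^[d x] z ∈ A} ∩ ⋂ m ∈ Finset.range (d x), {z | f^[m] z ∉ A} := by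
      ext z
      simp only [Set.mem_preimage, Set.mem_singleton_iff, Set.mem_inter_iff, Set.mem_iInter,
        Finset.mem_range, Set.mem_setOf_eq]
      constructor
      · intro hz
        exact ⟨hz ▸ hd_spec z, fun m hm => hd_min z m (hz ▸ hm)⟩
      · rintro ⟨h1, h2⟩
        have h3 := hd_le z _ h1
        rcases lt_or_eq_of_le h3 with h4 | h4
        · exact absurd (hd_spec z) (h2 _ h4)
        · exact h4
    rw [this]
    exact ((hAmeas.preimage (hf.iterate _))).inter
      (MeasurableSet.iInter fun m => MeasurableSet.iInter fun _ =>
        (hAmeas.preimage (hf.iterate m)).compl)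
  -- d decreases by one along edges out of A's complement
  have hstep : ∀ x : X, x ∉ A → d x = d (f x) + 1 := by
    intro x hx
    have h1 : d x ≠ 0 := fun h0 => hx (by simpa [h0] using hd_spec x)
    have h2 : d (f x) ≤ d x - 1 := by
      apply hd_le
      have : f^[d x] x = f^[d x - 1] (f x) := by
        conv_lhs => rw [show d x = (d x - 1) + 1 by omega]
        rw [Function.iterate_succ_apply]
      exact this ▸ hd_spec x
    have h3 : d x ≤ d (f x) + 1 := by
      apply hd_le
      rw [Function.iterate_succ_apply]
      exact hd_spec (f x)
    omega
  set c : X → Fin 3 := fun x => if x ∈ A then 0 else if d x % 2 = 0 then 1 else 2 with hcdef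
  have hc : Measurable c := by
    apply Measurable.ite hAmeas measurable_const
    exact (measurable_from_nat (f := fun n : ℕ => if n % 2 = 0 then (1 : Fin 3) else 2)).comp hd
  refine ⟨c, hc, ?_⟩
  have key : ∀ x y : X, x ≠ y → f x = y → c x ≠ c y := by
    intro x y hxy hfx
    by_cases hx : x ∈ A <;> by_cases hy : y ∈ A
    · exact absurd hfx (hAind x hx y hy hxy).1
    · simp only [c, if_pos hx, if_neg hy]
      split <;> decide
    · simp only [c, if_neg hx, if_pos hy]
      split <;> decide
    · have := hstep x hx
      rw [hfx] at this
      simp only [c, if_neg hx, if_neg hy]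
      by_cases h2 : d y % 2 = 0
      · rw [if_neg (by omega), if_pos h2]; decide
      · rw [if_pos (by omega), if_neg h2]; decide
  intro x y hxy hor
  rcases hor with h | h
  · exact key x y hxy h
  · exact (key y x (Ne.symm hxy) h).symm

end Aux

theorem single_function_tfae {X : Type*} [MeasurableSpace X] [StandardBorelSpace X]
    (f : X → X) (hf : Measurable f) :
    ((∃ k : ℕ, ∃ c : X → Fin k, Measurable c ∧
        ∀ x y : X, x ≠ y → (f x = y ∨ f y = x) → c x ≠ c y) →
      (∃ A : Set X, MeasurableSet A ∧
        (∀ x ∈ A, ∀ y ∈ A, x ≠ y → f x ≠ y ∧ f y ≠ x) ∧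
        (∀ x : X, ∃ k : ℕ, f^[k] x ∈ A))) ∧
    ((∃ A : Set X, MeasurableSet A ∧
        (∀ x ∈ A, ∀ y ∈ A, x ≠ y → f x ≠ y ∧ f y ≠ x) ∧
        (∀ x : X, ∃ k : ℕ, f^[k] x ∈ A)) →
      (∃ c : X → Fin 3, Measurable c ∧
        ∀ x y : X, x ≠ y → (f x = y ∨ f y = x) → c x ≠ c y)) ∧
    ((∃ c : X → Fin 3, Measurable c ∧
        ∀ x y : X, x ≠ y → (f x = y ∨ f y = x) → c x ≠ c y) →
      (∃ k : ℕ, ∃ c : X → Fin k, Measurable c ∧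
        ∀ x y : X, x ≠ y → (f x = y ∨ f y = x) → c x ≠ c y)) := by
  refine ⟨aux_one_two f hf, aux_two_three f hf, ?_⟩
  rintro ⟨c, hc, hprop⟩
  exact ⟨3, c, hc, hprop⟩
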